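/- Let 𝒦 be a complex Hilbert space, A a bounded self-adjoint operator on 𝒦, g ∈ 𝒦, Ω ∈ ℝ and λ > 0. On ℋ = ℂ × 𝒦 define the bounded self-adjoint operators h₀(c,ψ) = (Ω·c, Aψ) and h = h₀ + λV, where V(c,ψ) = (⟨g,ψ⟩, c·g). Then for every z ∈ ℂ with Im z ≠ 0 the operators z − h₀ and z − h are boundedly invertible and (z − h)⁻¹ = (z − h₀)⁻¹ + B(z)(z − h₀)⁻¹, where, writing η(z) = z − Ω − λ²⟨g,(z − A)⁻¹g⟩, e₀ = (1,0) ∈ ℋ, ĝ = (0,g) ∈ ℋ, w(z) = (0,(z − A)⁻¹g) ∈ ℋ, and (ξ ⊗ ζ)ψ := ⟨ζ,ψ⟩ξ, one has B(z) = λ²(⟨g,(z−A)⁻¹g⟩/η(z)) e₀⊗e₀ + λ((z−Ω)/η(z)) w(z)⊗e₀ + (λ/η(z)) e₀⊗ĝ + (λ²/η(z)) w(z)⊗ĝ. -/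

import Mathlib

open scoped ComplexInnerProductSpace

/-- The rank-one operator `(ξ ⊗ ζ) ψ = ⟪ζ, ψ⟫ ξ`. -/
noncomputable def rankOne {H : Type*} [NormedAddCommGroup H]
    [InnerProductSpace ℂ H] (ξ ζ : H) : H →L[ℂ] H :=
  (innerSL ℂ ζ).smulRight ξ

section helpers
variable {H : Type*} [NormedAddCommGroup H] [InnerProductSpace ℂ H]

@[simp] lemma rankOne_apply (ξ ζ x : H) : rankOne ξ ζ x = ⟪ζ, x⟫ • ξ := rfl

lemma comp_rankOne (T : H →L[ℂ] H) (ξ ζ : H) : T * rankOne ξ ζ = rankOne (T ξ) ζ := by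
  ext x; simp [ContinuousLinearMap.mul_apply]

lemma rankOne_comp_rankOne (ξ ζ ξ' ζ' : H) :
    rankOne ξ ζ * rankOne ξ' ζ' = ⟪ζ, ξ'⟫ • rankOne ξ ζ' := by
  ext x
  simp [ContinuousLinearMap.mul_apply, inner_smul_right, smul_smul, mul_comm]

lemma rankOne_smul_left (c : ℂ) (ξ ζ : H) : rankOne (c • ξ) ζ = c • rankOne ξ ζ := by
  ext x
  simp only [rankOne_apply, ContinuousLinearMap.smul_apply]
  exact smul_comm _ _ _

lemma ringInverse_eq_of_mul_eq_one {M : Type*} [MonoidWithZero M] {a b : M}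
    (ha : IsUnit a) (hab : a * b = 1) : Ring.inverse a = b := by
  obtain ⟨u, rfl⟩ := ha
  rw [Ring.inverse_unit]
  exact Units.inv_eq_of_mul_eq_one_right hab

lemma isUnit_smul_one_sub [CompleteSpace H]
    (T : H →L[ℂ] H) (hT : IsSelfAdjoint T) {z : ℂ} (hz : z.im ≠ 0) :
    IsUnit (z • (1 : H →L[ℂ] H) - T) := by
  have hmem : z ∉ spectrum ℂ T := fun hmem => hz (hT.im_eq_zero_of_mem_spectrum hmem)
  rw [spectrum.notMem_iff] at hmem
  simpa [Algebra.algebraMap_eq_smul_one] using hmem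

lemma main_alg [CompleteSpace H]
    (h₀ h V : H →L[ℂ] H) (z Ωc α L : ℂ) (e₀ gH w : H)
    (hηne : z - Ωc - L ^ 2 * α ≠ 0)
    (i1 : ⟪e₀, e₀⟫ = 1) (i2 : ⟪gH, e₀⟫ = 0) (i3 : ⟪e₀, w⟫ = 0) (i4 : ⟪gH, w⟫ = α)
    (a1 : (z • (1 : H →L[ℂ] H) - h₀) e₀ = (z - Ωc) • e₀)
    (a2 : (z • (1 : H →L[ℂ] H) - h₀) w = gH)
    (hVeq : V = rankOne e₀ gH + rankOne gH e₀)
    (hh : h = h₀ + L • V)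
    (hU0 : IsUnit (z • (1 : H →L[ℂ] H) - h₀))
    (hUh : IsUnit (z • (1 : H →L[ℂ] H) - h)) :
    Ring.inverse (z • (1 : H →L[ℂ] H) - h) =
      Ring.inverse (z • (1 : H →L[ℂ] H) - h₀) +
        ((L ^ 2 * (α / (z - Ωc - L ^ 2 * α))) • rankOne e₀ e₀ +
          (L * ((z - Ωc) / (z - Ωc - L ^ 2 * α))) • rankOne w e₀ +
          (L / (z - Ωc - L ^ 2 * α)) • rankOne e₀ gH +
          (L ^ 2 / (z - Ωc - L ^ 2 * α)) • rankOne w gH) *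
          Ring.inverse (z • (1 : H →L[ℂ] H) - h₀) := by
  set η : ℂ := z - Ωc - L ^ 2 * α with hηdef
  set B : H →L[ℂ] H :=
    (L ^ 2 * (α / η)) • rankOne e₀ e₀ + (L * ((z - Ωc) / η)) • rankOne w e₀ +
      (L / η) • rankOne e₀ gH + (L ^ 2 / η) • rankOne w gH with hB
  have key : (z • (1 : H →L[ℂ] H) - h₀) * B = L • (V * (1 + B)) := by
    rw [hB, hVeq]
    simp only [mul_add, add_mul, mul_one, mul_smul_comm, rankOne_comp_rankOne,
      i1, i2, i3, i4, smul_add, smul_smul, one_smul, zero_smul, smul_zero,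
      add_zero, zero_add]
    simp only [comp_rankOne, a1, a2, rankOne_smul_left, smul_smul]
    match_scalars
    all_goals field_simp
    all_goals (try rw [hηdef])
    all_goals ring
  have key2 : (z • (1 : H →L[ℂ] H) - h) * (1 + B) = z • (1 : H →L[ℂ] H) - h₀ := by
    rw [hh]
    have hsplit : z • (1 : H →L[ℂ] H) - (h₀ + L • V) =
        (z • (1 : H →L[ℂ] H) - h₀) - L • V := by abel
    rw [hsplit, sub_mul, mul_one_add, smul_mul_assoc, ← key]
    abel
  have key3 : (z • (1 : H →L[ℂ] H) - h) *
      ((1 + B) * Ring.inverse (z • (1 : H →L[ℂ] H) - h₀)) = 1 := by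
    rw [← mul_assoc, key2, Ring.mul_inverse_cancel _ hU0]
  have := ringInverse_eq_of_mul_eq_one hUh key3
  rw [this, add_mul, one_mul]

end helpers

set_option maxHeartbeats 2000000 in
/-- Resolvent formula for the coupled one-particle Hamiltonian: on
`ℋ = ℂ ×₂ 𝒦` let `h₀(c,ψ) = (Ωc, Aψ)` and `h = h₀ + λV` with
`V(c,ψ) = (⟪g,ψ⟫, c•g)`.  For `Im z ≠ 0` the operators `z - A`, `z - h₀`,
`z - h` are invertible and
`(z - h)⁻¹ = (z - h₀)⁻¹ + B(z)(z - h₀)⁻¹`, where, with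
`η(z) = z - Ω - λ²⟪g,(z - A)⁻¹g⟫`, `e₀ = (1,0)`, `gHat = (0,g)`,
`w(z) = (0,(z - A)⁻¹g)`,
`B(z) = λ²(⟪g,(z-A)⁻¹g⟫/η) e₀⊗e₀ + λ((z-Ω)/η) w⊗e₀ + (λ/η) e₀⊗gHat + (λ²/η) w⊗gHat`. -/
theorem stmt_0 {K : Type*} [NormedAddCommGroup K] [InnerProductSpace ℂ K]
    [CompleteSpace K] (A : K →L[ℂ] K) (hA : IsSelfAdjoint A) (g : K)
    (Ω : ℝ) (lam : ℝ) (hlam : 0 < lam)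
    (h₀ h V : WithLp 2 (ℂ × K) →L[ℂ] WithLp 2 (ℂ × K))
    (hh₀ : ∀ (c : ℂ) (ψ : K),
      h₀ ((WithLp.equiv 2 (ℂ × K)).symm (c, ψ)) =
        (WithLp.equiv 2 (ℂ × K)).symm ((Ω : ℂ) * c, A ψ))
    (hV : ∀ (c : ℂ) (ψ : K),
      V ((WithLp.equiv 2 (ℂ × K)).symm (c, ψ)) =
        (WithLp.equiv 2 (ℂ × K)).symm ((⟪g, ψ⟫ : ℂ), c • g))
    (hh : h = h₀ + (lam : ℂ) • V)
    (z : ℂ) (hz : z.im ≠ 0) :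
    IsUnit (z • (1 : K →L[ℂ] K) - A) ∧
    IsUnit (z • (1 : WithLp 2 (ℂ × K) →L[ℂ] WithLp 2 (ℂ × K)) - h₀) ∧
    IsUnit (z • (1 : WithLp 2 (ℂ × K) →L[ℂ] WithLp 2 (ℂ × K)) - h) ∧
    (let RA : K →L[ℂ] K := Ring.inverse (z • (1 : K →L[ℂ] K) - A);
     let η : ℂ := z - (Ω : ℂ) - (lam : ℂ) ^ 2 * ⟪g, RA g⟫;
     let e₀ : WithLp 2 (ℂ × K) := (WithLp.equiv 2 (ℂ × K)).symm (1, 0);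
     let gHat : WithLp 2 (ℂ × K) := (WithLp.equiv 2 (ℂ × K)).symm (0, g);
     let w : WithLp 2 (ℂ × K) := (WithLp.equiv 2 (ℂ × K)).symm (0, RA g);
     let B : WithLp 2 (ℂ × K) →L[ℂ] WithLp 2 (ℂ × K) :=
       ((lam : ℂ) ^ 2 * (⟪g, RA g⟫ / η)) • rankOne e₀ e₀ +
         ((lam : ℂ) * ((z - (Ω : ℂ)) / η)) • rankOne w e₀ +
         ((lam : ℂ) / η) • rankOne e₀ gHat +
         ((lam : ℂ) ^ 2 / η) • rankOne w gHat;
     Ring.inverse (z • (1 : WithLp 2 (ℂ × K) →L[ℂ] WithLp 2 (ℂ × K)) - h) =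
       Ring.inverse (z • (1 : WithLp 2 (ℂ × K) →L[ℂ] WithLp 2 (ℂ × K)) - h₀) +
         B * Ring.inverse
           (z • (1 : WithLp 2 (ℂ × K) →L[ℂ] WithLp 2 (ℂ × K)) - h₀)) := by
  have hsymA := ContinuousLinearMap.isSelfAdjoint_iff_isSymmetric.mp hA
  -- self-adjointness of `h₀`, `V`, `h`
  have hsym0 : IsSelfAdjoint h₀ := by
    rw [ContinuousLinearMap.isSelfAdjoint_iff_isSymmetric]
    have key : ∀ (c d : ℂ) (ψ φ : K),
        ⟪h₀ ((WithLp.equiv 2 (ℂ × K)).symm (c, ψ)), (WithLp.equiv 2 (ℂ × K)).symm (d, φ)⟫ =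
          ⟪(WithLp.equiv 2 (ℂ × K)).symm (c, ψ), h₀ ((WithLp.equiv 2 (ℂ × K)).symm (d, φ))⟫ := by
      intro c d ψ φ
      rw [hh₀, hh₀]
      simp only [WithLp.prod_inner_apply, WithLp.equiv_symm_apply, WithLp.ofLp_toLp,
        RCLike.inner_apply, map_mul, Complex.conj_ofReal]
      congr 1
      · ring
      · exact hsymA ψ φ
    intro x y
    have := key ((WithLp.equiv 2 (ℂ × K)) x).1 ((WithLp.equiv 2 (ℂ × K)) y).1
      ((WithLp.equiv 2 (ℂ × K)) x).2 ((WithLp.equiv 2 (ℂ × K)) y).2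
    simpa only [Prod.mk.eta, Equiv.symm_apply_apply, ContinuousLinearMap.coe_coe] using this
  have hsymV : IsSelfAdjoint V := by
    rw [ContinuousLinearMap.isSelfAdjoint_iff_isSymmetric]
    have key : ∀ (c d : ℂ) (ψ φ : K),
        ⟪V ((WithLp.equiv 2 (ℂ × K)).symm (c, ψ)), (WithLp.equiv 2 (ℂ × K)).symm (d, φ)⟫ =
          ⟪(WithLp.equiv 2 (ℂ × K)).symm (c, ψ), V ((WithLp.equiv 2 (ℂ × K)).symm (d, φ))⟫ := by
      intro c d ψ φ
      rw [hV, hV]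
      simp only [WithLp.prod_inner_apply, WithLp.equiv_symm_apply, WithLp.ofLp_toLp,
        RCLike.inner_apply, inner_smul_left, inner_smul_right, ← inner_conj_symm ψ g]
      ring
    intro x y
    have := key ((WithLp.equiv 2 (ℂ × K)) x).1 ((WithLp.equiv 2 (ℂ × K)) y).1
      ((WithLp.equiv 2 (ℂ × K)) x).2 ((WithLp.equiv 2 (ℂ × K)) y).2
    simpa only [Prod.mk.eta, Equiv.symm_apply_apply, ContinuousLinearMap.coe_coe] using this
  have hsah : IsSelfAdjoint h := by
    have hlamsa : IsSelfAdjoint ((lam : ℂ)) := by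
      simp [isSelfAdjoint_iff, Complex.star_def, Complex.conj_ofReal]
    rw [hh]
    have a := hsym0
    have b := hsymV
    rw [ContinuousLinearMap.isSelfAdjoint_iff_isSymmetric] at a b ⊢
    intro x y
    have ha := a x y
    have hb := b x y
    simp only [ContinuousLinearMap.coe_coe] at ha hb ⊢
    simp only [ContinuousLinearMap.add_apply, ContinuousLinearMap.smul_apply, inner_add_left,
      inner_add_right, inner_smul_left, inner_smul_right, Complex.conj_ofReal, ha, hb]
  -- invertibility
  have hUA : IsUnit (z • (1 : K →L[ℂ] K) - A) := isUnit_smul_one_sub A hA hz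
  have hU0 : IsUnit (z • (1 : WithLp 2 (ℂ × K) →L[ℂ] WithLp 2 (ℂ × K)) - h₀) :=
    isUnit_smul_one_sub h₀ hsym0 hz
  have hUh : IsUnit (z • (1 : WithLp 2 (ℂ × K) →L[ℂ] WithLp 2 (ℂ × K)) - h) :=
    isUnit_smul_one_sub h hsah hz
  refine ⟨hUA, hU0, hUh, ?_⟩
  dsimp only
  set RA : K →L[ℂ] K := Ring.inverse (z • (1 : K →L[ℂ] K) - A) with hRA
  -- the resolvent of `A` really inverts
  have hgu : (z • (1 : K →L[ℂ] K) - A) (RA g) = g := by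
    have h1 : (z • (1 : K →L[ℂ] K) - A) * RA = 1 := Ring.mul_inverse_cancel _ hUA
    calc (z • (1 : K →L[ℂ] K) - A) (RA g) = ((z • (1 : K →L[ℂ] K) - A) * RA) g := rfl
      _ = g := by rw [h1]; rfl
  -- `η ≠ 0`
  have hηne : z - (Ω : ℂ) - (lam : ℂ) ^ 2 * ⟪g, RA g⟫ ≠ 0 := by
    set u : K := RA g with hu
    have hαval : (⟪g, u⟫ : ℂ) = (starRingEnd ℂ) z * ⟪u, u⟫ - ⟪A u, u⟫ := by
      conv_lhs => rw [← hgu]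
      simp [ContinuousLinearMap.sub_apply, ContinuousLinearMap.smul_apply,
        ContinuousLinearMap.one_apply, inner_sub_left, inner_smul_left]
      ring
    have hAuu : (⟪A u, u⟫ : ℂ).im = 0 := by
      have h2 : (starRingEnd ℂ) ⟪A u, u⟫ = ⟪A u, u⟫ := by
        rw [inner_conj_symm]
        exact (hsymA u u).symm
      exact Complex.conj_eq_iff_im.mp h2
    have huu : (⟪u, u⟫ : ℂ) = ((‖u‖ ^ 2 : ℝ) : ℂ) := by
      rw [inner_self_eq_norm_sq_to_K]; norm_cast
    have hαim : (⟪g, u⟫ : ℂ).im = -z.im * ‖u‖ ^ 2 := by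
      rw [hαval, huu]
      simp [Complex.sub_im, Complex.mul_im, hAuu, Complex.conj_im, Complex.conj_re,
        ← Complex.ofReal_pow, Complex.ofReal_im, Complex.ofReal_re]
    intro h0
    have hlam2 : ((lam : ℂ)) ^ 2 = ((lam ^ 2 : ℝ) : ℂ) := by push_cast; ring
    have him : (z - (Ω : ℂ) - (lam : ℂ) ^ 2 * ⟪g, u⟫).im = z.im * (1 + lam ^ 2 * ‖u‖ ^ 2) := by
      rw [hlam2]
      simp only [Complex.sub_im, Complex.mul_im, Complex.ofReal_im, Complex.ofReal_re, hαim,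
        zero_mul, mul_zero]
      ring
    rw [h0] at him
    simp only [Complex.zero_im] at him
    have hpos : (0 : ℝ) < 1 + lam ^ 2 * ‖u‖ ^ 2 := by positivity
    rcases mul_eq_zero.mp him.symm with h' | h'
    · exact hz h'
    · linarith
  -- geometric facts about `e₀`, `gHat`, `w`
  have i1 : ⟪(WithLp.equiv 2 (ℂ × K)).symm ((1 : ℂ), (0 : K)),
      (WithLp.equiv 2 (ℂ × K)).symm ((1 : ℂ), (0 : K))⟫ = (1 : ℂ) := by
    simp [WithLp.prod_inner_apply, WithLp.equiv_symm_apply, WithLp.ofLp_toLp,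
      RCLike.inner_apply]
  have i2 : ⟪(WithLp.equiv 2 (ℂ × K)).symm ((0 : ℂ), g),
      (WithLp.equiv 2 (ℂ × K)).symm ((1 : ℂ), (0 : K))⟫ = (0 : ℂ) := by
    simp [WithLp.prod_inner_apply, WithLp.equiv_symm_apply, WithLp.ofLp_toLp,
      RCLike.inner_apply]
  have i3 : ⟪(WithLp.equiv 2 (ℂ × K)).symm ((1 : ℂ), (0 : K)),
      (WithLp.equiv 2 (ℂ × K)).symm ((0 : ℂ), RA g)⟫ = (0 : ℂ) := by
    simp [WithLp.prod_inner_apply, WithLp.equiv_symm_apply, WithLp.ofLp_toLp,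
      RCLike.inner_apply]
  have i4 : ⟪(WithLp.equiv 2 (ℂ × K)).symm ((0 : ℂ), g),
      (WithLp.equiv 2 (ℂ × K)).symm ((0 : ℂ), RA g)⟫ = (⟪g, RA g⟫ : ℂ) := by
    simp [WithLp.prod_inner_apply, WithLp.equiv_symm_apply, WithLp.ofLp_toLp,
      RCLike.inner_apply]
  have a1 : (z • (1 : WithLp 2 (ℂ × K) →L[ℂ] WithLp 2 (ℂ × K)) - h₀)
      ((WithLp.equiv 2 (ℂ × K)).symm ((1 : ℂ), (0 : K))) =
      (z - (Ω : ℂ)) • (WithLp.equiv 2 (ℂ × K)).symm ((1 : ℂ), (0 : K)) := by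
    have h1 : h₀ ((WithLp.equiv 2 (ℂ × K)).symm ((1 : ℂ), (0 : K))) =
        (WithLp.equiv 2 (ℂ × K)).symm ((Ω : ℂ), (0 : K)) := by
      rw [hh₀]; simp
    rw [WithLp.equiv_symm_apply] at h1
    simp only [ContinuousLinearMap.sub_apply, ContinuousLinearMap.smul_apply,
      ContinuousLinearMap.one_apply, h1, WithLp.equiv_symm_apply, ← WithLp.toLp_smul, ← WithLp.toLp_sub]
    congr 1
    simp [Prod.smul_mk, Prod.mk_sub_mk]
  have a2 : (z • (1 : WithLp 2 (ℂ × K) →L[ℂ] WithLp 2 (ℂ × K)) - h₀)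
      ((WithLp.equiv 2 (ℂ × K)).symm ((0 : ℂ), RA g)) =
      (WithLp.equiv 2 (ℂ × K)).symm ((0 : ℂ), g) := by
    have h1 : h₀ ((WithLp.equiv 2 (ℂ × K)).symm ((0 : ℂ), RA g)) =
        (WithLp.equiv 2 (ℂ × K)).symm ((0 : ℂ), A (RA g)) := by
      rw [hh₀]; simp
    rw [WithLp.equiv_symm_apply] at h1
    simp only [ContinuousLinearMap.sub_apply, ContinuousLinearMap.smul_apply,
      ContinuousLinearMap.one_apply, h1, WithLp.equiv_symm_apply, ← WithLp.toLp_smul, ← WithLp.toLp_sub]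
    congr 1
    have : z • RA g - A (RA g) = (z • (1 : K →L[ℂ] K) - A) (RA g) := by
      simp [ContinuousLinearMap.sub_apply, ContinuousLinearMap.smul_apply,
        ContinuousLinearMap.one_apply]
    simp [Prod.smul_mk, Prod.mk_sub_mk, this, hgu]
  have hVeq : V = rankOne ((WithLp.equiv 2 (ℂ × K)).symm ((1 : ℂ), (0 : K)))
        ((WithLp.equiv 2 (ℂ × K)).symm ((0 : ℂ), g)) +
      rankOne ((WithLp.equiv 2 (ℂ × K)).symm ((0 : ℂ), g))
        ((WithLp.equiv 2 (ℂ × K)).symm ((1 : ℂ), (0 : K))) := by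
    have key : ∀ (c : ℂ) (ψ : K),
        V ((WithLp.equiv 2 (ℂ × K)).symm (c, ψ)) =
        (rankOne ((WithLp.equiv 2 (ℂ × K)).symm ((1 : ℂ), (0 : K)))
            ((WithLp.equiv 2 (ℂ × K)).symm ((0 : ℂ), g)) +
          rankOne ((WithLp.equiv 2 (ℂ × K)).symm ((0 : ℂ), g))
            ((WithLp.equiv 2 (ℂ × K)).symm ((1 : ℂ), (0 : K))))
          ((WithLp.equiv 2 (ℂ × K)).symm (c, ψ)) := by
      intro c ψ
      rw [hV]
      simp only [ContinuousLinearMap.add_apply, rankOne_apply, WithLp.prod_inner_apply,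
        WithLp.equiv_symm_apply, WithLp.ofLp_toLp, RCLike.inner_apply, map_one, map_zero,
        one_mul, zero_mul, inner_zero_left, add_zero, zero_add,
        WithLp.equiv_symm_apply, ← WithLp.toLp_smul, ← WithLp.toLp_add]
      congr 1
      simp [Prod.smul_mk, Prod.mk_add_mk]
    ext x
    have := key ((WithLp.equiv 2 (ℂ × K)) x).1 ((WithLp.equiv 2 (ℂ × K)) x).2
    simpa only [Prod.mk.eta, Equiv.symm_apply_apply] using this
  exact main_alg h₀ h V z (Ω : ℂ) (⟪g, RA g⟫ : ℂ) ((lam : ℂ))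
    ((WithLp.equiv 2 (ℂ × K)).symm ((1 : ℂ), (0 : K)))
    ((WithLp.equiv 2 (ℂ × K)).symm ((0 : ℂ), g))
    ((WithLp.equiv 2 (ℂ × K)).symm ((0 : ℂ), RA g))
    hηne i1 i2 i3 i4 a1 a2 hVeq hh hU0 hUh
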